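/- For ν > 0 and α > 0, the Matérn correlation function M(x) = (2^(1-ν)/Γ(ν)) (x/α)^ν K_ν(x/α) admits the exact Gamma-mixture representation M(x) = ∫₀^∞ exp(-x²/(2λ)) p(λ) dλ for all x > 0, where p is the density of the Gamma(ν, 2α²) distribution, i.e. p(λ) = λ^(ν-1) exp(-λ/(2α²)) / (Γ(ν)(2α²)^ν). -/

import Mathlib

open MeasureTheory Real Set
open scoped ENNReal

/-- The modified Bessel function of the second kind, via its integral representation
`K_ν(z) = (1/2)(z/2)^ν ∫₀^∞ exp(-t - z²/(4t)) t^(-ν-1) dt`. -/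
noncomputable def besselK (ν z : ℝ) : ℝ :=
  (1 / 2) * (z / 2) ^ ν *
    ∫ t in Set.Ioi (0 : ℝ), Real.exp (-t - z ^ 2 / (4 * t)) * t ^ (-ν - 1)

/-- For `ν, α > 0`, the Matérn correlation
`M(x) = (2^(1-ν)/Γ(ν)) (x/α)^ν K_ν(x/α)` equals the Gamma mixture
`∫₀^∞ exp(-x²/(2λ)) p(λ) dλ`, where `p` is the Gamma(ν, 2α²) (shape-scale) density. -/
theorem matern_gamma_mixture (ν α : ℝ) (hν : 0 < ν) (hα : 0 < α) (x : ℝ) (hx : 0 < x) :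
    2 ^ (1 - ν) / Real.Gamma ν * (x / α) ^ ν * besselK ν (x / α) =
      ∫ l in Set.Ioi (0 : ℝ),
        Real.exp (-x ^ 2 / (2 * l)) *
          (l ^ (ν - 1) * Real.exp (-l / (2 * α ^ 2)) /
            (Real.Gamma ν * (2 * α ^ 2) ^ ν)) := by
  have hΓ : 0 < Real.Gamma ν := Real.Gamma_pos_of_pos hν
  set c : ℝ := x ^ 2 / 2 with hc
  have hcpos : 0 < c := by positivity
  set g : ℝ → ℝ := fun l =>
    Real.exp (-x ^ 2 / (2 * l)) *
      (l ^ (ν - 1) * Real.exp (-l / (2 * α ^ 2)) / (Real.Gamma ν * (2 * α ^ 2) ^ ν))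
    with hg
  have himg : (fun t : ℝ => c / t) '' Ioi 0 = Ioi 0 := by
    ext y
    constructor
    · rintro ⟨t, ht, rfl⟩
      exact div_pos hcpos ht
    · intro hy
      exact ⟨c / y, div_pos hcpos hy, by field_simp⟩
  have hderiv : ∀ t ∈ Ioi (0 : ℝ), HasDerivWithinAt (fun t : ℝ => c / t)
      (-c / t ^ 2) (Ioi 0) t := by
    intro t ht
    have h := ((hasDerivAt_inv (ne_of_gt ht)).const_mul c).hasDerivWithinAt (s := Ioi 0)
    have he : (fun t : ℝ => c / t) = fun t : ℝ => c * t⁻¹ := by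
      funext u; rw [div_eq_mul_inv]
    rw [he]
    exact h.congr_deriv (by ring)
  have hinj : InjOn (fun t : ℝ => c / t) (Ioi 0) := by
    intro a ha b hb hab
    simp only at hab
    rw [div_eq_div_iff (ne_of_gt ha) (ne_of_gt hb)] at hab
    exact (mul_left_cancel₀ (ne_of_gt hcpos) hab).symm
  have hsub := integral_image_eq_integral_abs_deriv_smul measurableSet_Ioi hderiv hinj g
  rw [show (∫ l in Set.Ioi (0 : ℝ),
        Real.exp (-x ^ 2 / (2 * l)) *
          (l ^ (ν - 1) * Real.exp (-l / (2 * α ^ 2)) /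
            (Real.Gamma ν * (2 * α ^ 2) ^ ν))) = ∫ l in Set.Ioi (0 : ℝ), g l from rfl,
    ← himg, hsub]
  have hpt : ∀ t ∈ Ioi (0 : ℝ),
      |(-c / t ^ 2)| • g (c / t) =
        (c ^ ν / (Real.Gamma ν * (2 * α ^ 2) ^ ν)) *
          (Real.exp (-t - (x / α) ^ 2 / (4 * t)) * t ^ (-ν - 1)) := by
    intro t ht
    have ht' : (0 : ℝ) < t := ht
    have h1 : |(-c / t ^ 2)| = c / t ^ 2 := by
      rw [abs_div, abs_neg, abs_of_pos hcpos, abs_of_pos (by positivity : (0:ℝ) < t ^ 2)]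
    rw [smul_eq_mul, h1]
    simp only [hg]
    have hexp1 : -x ^ 2 / (2 * (c / t)) = -t := by
      rw [hc]; field_simp
    have hexp2 : -(c / t) / (2 * α ^ 2) = -((x / α) ^ 2 / (4 * t)) := by
      rw [hc]; field_simp; ring
    have hrpow : (c / t) ^ (ν - 1) = c ^ (ν - 1) * t ^ (-(ν - 1)) := by
      rw [Real.div_rpow hcpos.le ht'.le, Real.rpow_neg ht'.le, div_eq_mul_inv]
    rw [hexp1, hexp2, hrpow]
    have hA : c ^ ν = c ^ (ν - 1) * c := by
      rw [(Real.rpow_add_one (ne_of_gt hcpos) (ν - 1)).symm]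
      congr 1; ring
    have hB : t ^ (-ν - 1) = t ^ (-(ν - 1)) * t ^ (-(2:ℝ)) := by
      rw [← Real.rpow_add ht']; congr 1; ring
    have hC : t ^ (-(2:ℝ)) = (t ^ 2)⁻¹ := by
      rw [Real.rpow_neg ht'.le, show ((2:ℝ)) = ((2:ℕ):ℝ) from by norm_num,
        Real.rpow_natCast]
    have : Real.exp (-t - (x / α) ^ 2 / (4 * t)) =
        Real.exp (-t) * Real.exp (-((x / α) ^ 2 / (4 * t))) := by
      rw [← Real.exp_add]; ring_nf
    rw [this, hA, hB, hC]
    have h2 : (t:ℝ) ^ 2 ≠ 0 := by positivity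
    have hΓ2 : Real.Gamma ν * (2 * α ^ 2) ^ ν ≠ 0 := by
      have : (0:ℝ) < (2 * α ^ 2) ^ ν := Real.rpow_pos_of_pos (by positivity) ν
      positivity
    field_simp
  rw [setIntegral_congr_fun measurableSet_Ioi hpt, integral_const_mul]
  rw [besselK]
  rw [show 2 ^ (1 - ν) / Real.Gamma ν * (x / α) ^ ν *
      ((1 / 2) * (x / α / 2) ^ ν * ∫ t in Set.Ioi (0 : ℝ),
        Real.exp (-t - (x / α) ^ 2 / (4 * t)) * t ^ (-ν - 1)) =
      (2 ^ (1 - ν) / Real.Gamma ν * (x / α) ^ ν * ((1 / 2) * (x / α / 2) ^ ν)) *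
      ∫ t in Set.Ioi (0 : ℝ),
        Real.exp (-t - (x / α) ^ 2 / (4 * t)) * t ^ (-ν - 1) from by ring]
  congr 1
  have hxα : (0 : ℝ) < x / α := div_pos hx hα
  have e1 : (x / α) ^ ν * (x / α / 2) ^ ν = (x ^ 2 / 2 / α ^ 2) ^ ν := by
    rw [← Real.mul_rpow (by positivity) (by positivity)]
    congr 1
    field_simp
  have e2 : (x ^ 2 / 2 / α ^ 2) ^ ν * (α ^ 2) ^ ν = (x ^ 2 / 2) ^ ν := by
    rw [← Real.mul_rpow (by positivity) (by positivity),
      div_mul_cancel₀ _ (ne_of_gt (by positivity : (0:ℝ) < α ^ 2))]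
  have e3 : ((2 : ℝ) * α ^ 2) ^ ν = 2 ^ ν * (α ^ 2) ^ ν :=
    Real.mul_rpow (by norm_num) (by positivity)
  have e4 : (2:ℝ) ^ (1 - ν) = 2 / 2 ^ ν := by
    rw [Real.rpow_sub (by norm_num), Real.rpow_one]
  have h2ν : (0:ℝ) < (2:ℝ) ^ ν := Real.rpow_pos_of_pos two_pos ν
  have hαν : (0:ℝ) < ((α:ℝ) ^ 2) ^ ν := Real.rpow_pos_of_pos (by positivity) ν
  rw [hc, e3, e4]
  rw [show x / α / 2 = x / (α * 2) from by ring] at e1 ⊢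
  field_simp
  rw [mul_comm (2:ℝ) α]
  linear_combination e2 + (((α:ℝ) ^ 2) ^ ν) * e1
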